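/- The free product of two residually finite groups is residually finite. In particular, if Γ is residually finite and F is a free group, then the free product Γ * F is residually finite. -/

import Mathlib

open Monoid List Monoid.Coprod

open scoped Classical

/-- A group is residually finite: every nontrivial element survives in some
finite group quotient. -/
def IsResiduallyFinite (G : Type*) [Group G] : Prop :=
  ∀ g : G, g ≠ 1 → ∃ N : Subgroup G, N.Normal ∧ N.FiniteIndex ∧ g ∉ N

/-- hom-based residual finiteness -/
def RFin (G : Type) [Group G] : Prop :=
  ∀ g : G, g ≠ 1 → ∃ (K : Type) (_ : Group K) (_ : Finite K) (φ : G →* K), φ g ≠ 1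

section Basics
variable {G : Type} [Group G]

theorem RFin.isResiduallyFinite (h : RFin G) : IsResiduallyFinite G := by
  intro g hg
  obtain ⟨K, _, _, φ, hφ⟩ := h g hg
  refine ⟨φ.ker, MonoidHom.normal_ker φ, ⟨?_⟩, by simpa [MonoidHom.mem_ker] using hφ⟩
  rw [Subgroup.index_ker]
  exact Nat.card_ne_zero.2 ⟨⟨⟨1, 1, map_one φ⟩⟩, inferInstance⟩

theorem IsResiduallyFinite.rfin (h : IsResiduallyFinite G) : RFin G := by
  intro g hg
  obtain ⟨N, hN, hfi, hgN⟩ := h g hg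
  haveI := hN; haveI := hfi
  have hcard : Nat.card (G ⧸ N) ≠ 0 := by
    rw [← Subgroup.index_eq_card]; exact hfi.index_ne_zero
  refine ⟨G ⧸ N, inferInstance, (Nat.card_ne_zero.1 hcard).2, QuotientGroup.mk' N, ?_⟩
  simpa [QuotientGroup.eq_one_iff] using hgN

theorem RFin.exists_hom_list (h : RFin G) (xs : List G) (hxs : ∀ x ∈ xs, x ≠ 1) :
    ∃ (K : Type) (_ : Group K) (_ : Finite K) (φ : G →* K), ∀ x ∈ xs, φ x ≠ 1 := by
  induction xs with
  | nil => exact ⟨PUnit, inferInstance, inferInstance, 1, by simp⟩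
  | cons y t ih =>
    obtain ⟨K1, _, _, φ1, h1⟩ := h y (hxs y (mem_cons_self ..))
    obtain ⟨K2, _, _, φ2, h2⟩ := ih fun x hx => hxs x (mem_cons_of_mem _ hx)
    refine ⟨K1 × K2, inferInstance, inferInstance, φ1.prod φ2, ?_⟩
    intro x hx
    rcases mem_cons.1 hx with rfl | hx
    · exact fun hc => h1 (congrArg Prod.fst hc)
    · exact fun hc => h2 x hx (congrArg Prod.snd hc)

theorem RFin.of_injective {G' : Type} [Group G'] (j : G →* G')
    (hj : Function.Injective j) (h : RFin G') : RFin G := by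
  intro w hw
  obtain ⟨K, _, _, φ, hφ⟩ := h (j w) fun hc => hw (hj (by simpa using hc))
  exact ⟨K, ‹_›, ‹_›, φ.comp j, hφ⟩

end Basics

section Words
variable {A B : Type} [Group A] [Group B]

def Nt (x : A ⊕ B) : Prop := x ≠ Sum.inl 1 ∧ x ≠ Sum.inr 1

def Alt (l : List (A ⊕ B)) : Prop := l.Chain' fun x y => x.isLeft ≠ y.isLeft

def Red (l : List (A ⊕ B)) : Prop := Alt l ∧ ∀ x ∈ l, Nt x

def Ok (n : ℕ) (l : List (A ⊕ B)) : Prop := l.length ≤ n ∧ Red l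

theorem ok_nil {n : ℕ} : Ok n ([] : List (A ⊕ B)) :=
  ⟨Nat.zero_le n, List.isChain_nil, by simp⟩

theorem red_tail {x : A ⊕ B} {t : List (A ⊕ B)} (h : Red (x :: t)) : Red t :=
  ⟨h.1.tail, fun y hy => h.2 y (mem_cons_of_mem _ hy)⟩

end Words

section Act
variable {A B : Type} [Group A] [Group B]

/-- left action of `A` on bounded reduced words -/
noncomputable def preA (n : ℕ) (a : A) (l : List (A ⊕ B)) : List (A ⊕ B) :=
  match l with
  | Sum.inl a1 :: y => if a * a1 = 1 then y else Sum.inl (a * a1) :: y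
  | _ => if a = 1 ∨ l.length = n then l else Sum.inl a :: l

theorem preA_cons_inl {n : ℕ} (a a1 : A) (y : List (A ⊕ B)) :
    preA n a (Sum.inl a1 :: y) = if a * a1 = 1 then y else Sum.inl (a * a1) :: y := rfl

theorem preA_other {n : ℕ} (a : A) {l : List (A ⊕ B)}
    (hl : ∀ (c : A) (z : List (A ⊕ B)), l ≠ Sum.inl c :: z) :
    preA n a l = if a = 1 ∨ l.length = n then l else Sum.inl a :: l := by
  rcases l with _ | ⟨x | x, t⟩
  · rfl
  · exact absurd rfl (hl x t)
  · rfl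

theorem not_inl_headed_of_alt {a1 : A} {y : List (A ⊕ B)} (h : Alt (Sum.inl a1 :: y)) :
    ∀ (c : A) (z : List (A ⊕ B)), y ≠ Sum.inl c :: z := by
  rintro c z rfl
  have := (List.isChain_cons_cons.1 h).1
  simp at this

theorem Ok.preA {n : ℕ} {a : A} {l : List (A ⊕ B)} (h : Ok n l) : Ok n (preA n a l) := by
  obtain ⟨hlen, halt, hnt⟩ := h
  rcases l with _ | ⟨x | x, t⟩
  · rw [preA_other a (by simp)]
    split
    · exact ⟨hlen, halt, hnt⟩
    · rename_i hc
      push_neg at hc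
      refine ⟨by simpa using Nat.succ_le_of_lt (Nat.lt_of_le_of_ne (by simpa using hlen) hc.2), List.isChain_singleton _, ?_⟩
      simp only [mem_singleton]
      rintro x rfl
      exact ⟨by simpa using hc.1, by simp⟩
  · rw [preA_cons_inl]
    have ht : Red t := red_tail ⟨halt, hnt⟩
    split
    · exact ⟨le_trans (by simp) hlen, ht⟩
    · rename_i hc
      refine ⟨by simpa using hlen, ?_, ?_⟩
      · rcases t with _ | ⟨z, t'⟩
        · exact List.isChain_singleton _
        · exact List.isChain_cons_cons.2 ⟨(List.isChain_cons_cons.1 halt).1, (List.isChain_cons_cons.1 halt).2⟩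
      · intro y hy
        rcases mem_cons.1 hy with rfl | hy
        · exact ⟨by simpa using hc, by simp⟩
        · exact hnt y (mem_cons_of_mem _ hy)
  · rw [preA_other a (by simp)]
    split
    · exact ⟨hlen, halt, hnt⟩
    · rename_i hc
      push_neg at hc
      refine ⟨Nat.lt_of_le_of_ne hlen hc.2, ?_, ?_⟩
      · exact List.isChain_cons_cons.2 ⟨by simp, halt⟩
      · intro y hy
        rcases mem_cons.1 hy with rfl | hy
        · exact ⟨by simpa using hc.1, by simp⟩
        · exact hnt y hy

theorem preA_one {n : ℕ} {l : List (A ⊕ B)} (h : Ok n l) : preA n 1 l = l := by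
  rcases l with _ | ⟨x | x, t⟩
  · rw [preA_other 1 (by simp), if_pos (Or.inl rfl)]
  · have hx : x ≠ 1 := fun hc => (h.2.2 _ (mem_cons_self ..)).1 (by rw [hc])
    rw [preA_cons_inl, one_mul, if_neg hx]
  · rw [preA_other 1 (by simp), if_pos (Or.inl rfl)]

theorem preA_mul_other {n : ℕ} (a a' : A) {l : List (A ⊕ B)}
    (hl : ∀ (c : A) (z : List (A ⊕ B)), l ≠ Sum.inl c :: z) :
    preA n (a * a') l = preA n a (preA n a' l) := by
  rw [preA_other a' hl]
  by_cases h1 : a' = 1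
  · rw [if_pos (Or.inl h1), h1, mul_one, preA_other a hl]
  · by_cases h2 : l.length = n
    · rw [if_pos (Or.inr h2), preA_other _ hl, preA_other _ hl,
        if_pos (Or.inr h2), if_pos (Or.inr h2)]
    · rw [if_neg (by tauto), preA_cons_inl, preA_other _ hl]
      by_cases h3 : a * a' = 1 <;> simp [h3, h2]

theorem preA_mul {n : ℕ} (a a' : A) {l : List (A ⊕ B)} (h : Ok n l) :
    preA n (a * a') l = preA n a (preA n a' l) := by
  rcases l with _ | ⟨x | x, t⟩
  · exact preA_mul_other a a' (by simp)
  · obtain ⟨hlen, halt, hnt⟩ := h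
    have hy := not_inl_headed_of_alt halt
    have hylen : t.length ≠ n := by simp at hlen; omega
    rw [preA_cons_inl, preA_cons_inl]
    by_cases h1 : a' * x = 1
    · rw [if_pos h1]
      have key : a * a' * x = a := by rw [mul_assoc, h1, mul_one]
      rw [key, preA_other a hy]
      by_cases h2 : a = 1 <;> simp [h2, hylen]
    · rw [if_neg h1, preA_cons_inl, mul_assoc]
  · exact preA_mul_other a a' (by simp)

/-- left action of `B` on bounded reduced words -/
noncomputable def preB (n : ℕ) (b : B) (l : List (A ⊕ B)) : List (A ⊕ B) :=
  match l with
  | Sum.inr b1 :: y => if b * b1 = 1 then y else Sum.inr (b * b1) :: y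
  | _ => if b = 1 ∨ l.length = n then l else Sum.inr b :: l

theorem preB_cons_inr {n : ℕ} (b b1 : B) (y : List (A ⊕ B)) :
    preB n b (Sum.inr b1 :: y) = if b * b1 = 1 then y else Sum.inr (b * b1) :: y := rfl

theorem preB_other {n : ℕ} (b : B) {l : List (A ⊕ B)}
    (hl : ∀ (c : B) (z : List (A ⊕ B)), l ≠ Sum.inr c :: z) :
    preB n b l = if b = 1 ∨ l.length = n then l else Sum.inr b :: l := by
  rcases l with _ | ⟨x | x, t⟩
  · rfl
  · rfl
  · exact absurd rfl (hl x t)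

theorem not_inr_headed_of_alt {b1 : B} {y : List (A ⊕ B)} (h : Alt (Sum.inr b1 :: y)) :
    ∀ (c : B) (z : List (A ⊕ B)), y ≠ Sum.inr c :: z := by
  rintro c z rfl
  have := (List.isChain_cons_cons.1 h).1
  simp at this

theorem Ok.preB {n : ℕ} {b : B} {l : List (A ⊕ B)} (h : Ok n l) : Ok n (preB n b l) := by
  obtain ⟨hlen, halt, hnt⟩ := h
  rcases l with _ | ⟨x | x, t⟩
  · rw [preB_other b (by simp)]
    split
    · exact ⟨hlen, halt, hnt⟩
    · rename_i hc
      push_neg at hc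
      refine ⟨by simpa using Nat.succ_le_of_lt (Nat.lt_of_le_of_ne (by simpa using hlen) hc.2), List.isChain_singleton _, ?_⟩
      simp only [mem_singleton]
      rintro x rfl
      exact ⟨by simp, by simpa using hc.1⟩
  · rw [preB_other b (by simp)]
    split
    · exact ⟨hlen, halt, hnt⟩
    · rename_i hc
      push_neg at hc
      refine ⟨Nat.lt_of_le_of_ne hlen hc.2, ?_, ?_⟩
      · exact List.isChain_cons_cons.2 ⟨by simp, halt⟩
      · intro y hy
        rcases mem_cons.1 hy with rfl | hy
        · exact ⟨by simp, by simpa using hc.1⟩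
        · exact hnt y hy
  · rw [preB_cons_inr]
    have ht : Red t := red_tail ⟨halt, hnt⟩
    split
    · exact ⟨le_trans (by simp) hlen, ht⟩
    · rename_i hc
      refine ⟨by simpa using hlen, ?_, ?_⟩
      · rcases t with _ | ⟨z, t'⟩
        · exact List.isChain_singleton _
        · exact List.isChain_cons_cons.2 ⟨(List.isChain_cons_cons.1 halt).1, (List.isChain_cons_cons.1 halt).2⟩
      · intro y hy
        rcases mem_cons.1 hy with rfl | hy
        · exact ⟨by simp, by simpa using hc⟩
        · exact hnt y (mem_cons_of_mem _ hy)

theorem preB_one {n : ℕ} {l : List (A ⊕ B)} (h : Ok n l) : preB n 1 l = l := by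
  rcases l with _ | ⟨x | x, t⟩
  · rw [preB_other 1 (by simp), if_pos (Or.inl rfl)]
  · rw [preB_other 1 (by simp), if_pos (Or.inl rfl)]
  · have hx : x ≠ 1 := fun hc => (h.2.2 _ (mem_cons_self ..)).2 (by rw [hc])
    rw [preB_cons_inr, one_mul, if_neg hx]

theorem preB_mul_other {n : ℕ} (b b' : B) {l : List (A ⊕ B)}
    (hl : ∀ (c : B) (z : List (A ⊕ B)), l ≠ Sum.inr c :: z) :
    preB n (b * b') l = preB n b (preB n b' l) := by
  rw [preB_other b' hl]
  by_cases h1 : b' = 1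
  · rw [if_pos (Or.inl h1), h1, mul_one, preB_other b hl]
  · by_cases h2 : l.length = n
    · rw [if_pos (Or.inr h2), preB_other _ hl, preB_other _ hl,
        if_pos (Or.inr h2), if_pos (Or.inr h2)]
    · rw [if_neg (by tauto), preB_cons_inr, preB_other _ hl]
      by_cases h3 : b * b' = 1 <;> simp [h3, h2]

theorem preB_mul {n : ℕ} (b b' : B) {l : List (A ⊕ B)} (h : Ok n l) :
    preB n (b * b') l = preB n b (preB n b' l) := by
  rcases l with _ | ⟨x | x, t⟩
  · exact preB_mul_other b b' (by simp)
  · exact preB_mul_other b b' (by simp)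
  · obtain ⟨hlen, halt, hnt⟩ := h
    have hy := not_inr_headed_of_alt halt
    have hylen : t.length ≠ n := by simp at hlen; omega
    rw [preB_cons_inr, preB_cons_inr]
    by_cases h1 : b' * x = 1
    · rw [if_pos h1]
      have key : b * b' * x = b := by rw [mul_assoc, h1, mul_one]
      rw [key, preB_other b hy]
      by_cases h2 : b = 1 <;> simp [h2, hylen]
    · rw [if_neg h1, preB_cons_inr, mul_assoc]

variable (A B) in
abbrev XW (n : ℕ) : Type := {l : List (A ⊕ B) // Ok n l}

instance XW.finite (n : ℕ) [Finite A] [Finite B] : Finite (XW A B n) := by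
  have hfin : {l : List (A ⊕ B) | l.length ≤ n}.Finite := List.finite_length_le (A ⊕ B) n
  haveI := hfin.to_subtype
  refine Finite.of_injective
    (fun x : XW A B n => (⟨x.1, x.2.1⟩ : {l : List (A ⊕ B) | l.length ≤ n})) ?_
  intro x y hxy
  simp only [Subtype.mk.injEq] at hxy
  exact Subtype.ext hxy

noncomputable def homA (n : ℕ) : A →* Equiv.Perm (XW A B n) where
  toFun a :=
    { toFun := fun x => ⟨preA n a x.1, x.2.preA⟩
      invFun := fun x => ⟨preA n a⁻¹ x.1, x.2.preA⟩
      left_inv := fun x => Subtype.ext <| by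
        show preA _ _ (preA _ _ x.1) = x.1
        rw [← preA_mul _ _ x.2, inv_mul_cancel, preA_one x.2]
      right_inv := fun x => Subtype.ext <| by
        show preA _ _ (preA _ _ x.1) = x.1
        rw [← preA_mul _ _ x.2, mul_inv_cancel, preA_one x.2] }
  map_one' := Equiv.ext fun x => Subtype.ext (preA_one x.2)
  map_mul' a a' := Equiv.ext fun x => Subtype.ext (preA_mul a a' x.2)

noncomputable def homB (n : ℕ) : B →* Equiv.Perm (XW A B n) where
  toFun b :=
    { toFun := fun x => ⟨preB n b x.1, x.2.preB⟩
      invFun := fun x => ⟨preB n b⁻¹ x.1, x.2.preB⟩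
      left_inv := fun x => Subtype.ext <| by
        show preB _ _ (preB _ _ x.1) = x.1
        rw [← preB_mul _ _ x.2, inv_mul_cancel, preB_one x.2]
      right_inv := fun x => Subtype.ext <| by
        show preB _ _ (preB _ _ x.1) = x.1
        rw [← preB_mul _ _ x.2, mul_inv_cancel, preB_one x.2] }
  map_one' := Equiv.ext fun x => Subtype.ext (preB_one x.2)
  map_mul' b b' := Equiv.ext fun x => Subtype.ext (preB_mul b b' x.2)

theorem homA_apply (n : ℕ) (a : A) (x : XW A B n) :
    ((homA n a : Equiv.Perm (XW A B n)) x : List (A ⊕ B)) = preA n a x.1 := rfl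

theorem homB_apply (n : ℕ) (b : B) (x : XW A B n) :
    ((homB n b : Equiv.Perm (XW A B n)) x : List (A ⊕ B)) = preB n b x.1 := rfl

end Act

section Words2
variable {G H : Type} [Group G] [Group H]

def toCop : G ⊕ H → Coprod G H := Sum.elim (inl : G →* Coprod G H) (inr : H →* Coprod G H)

def prodL (L : List (G ⊕ H)) : Coprod G H := (L.map toCop).prod

theorem prodL_nil : prodL ([] : List (G ⊕ H)) = 1 := rfl

theorem prodL_cons (x : G ⊕ H) (t : List (G ⊕ H)) :
    prodL (x :: t) = toCop x * prodL t := by simp [prodL]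

theorem exists_prodL (w : Coprod G H) : ∃ L : List (G ⊕ H), prodL L = w := by
  induction w using Coprod.induction_on with
  | inl m => exact ⟨[Sum.inl m], by simp [prodL, toCop]⟩
  | inr m => exact ⟨[Sum.inr m], by simp [prodL, toCop]⟩
  | mul x y ihx ihy =>
    obtain ⟨L1, h1⟩ := ihx
    obtain ⟨L2, h2⟩ := ihy
    exact ⟨L1 ++ L2, by simp [prodL, ← h1, ← h2]⟩

noncomputable def rcons (x : G ⊕ H) (L : List (G ⊕ H)) : List (G ⊕ H) :=
  match x, L with
  | Sum.inl a, Sum.inl a1 :: t => if a * a1 = 1 then t else Sum.inl (a * a1) :: t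
  | Sum.inr b, Sum.inr b1 :: t => if b * b1 = 1 then t else Sum.inr (b * b1) :: t
  | x, L => if x = Sum.inl 1 ∨ x = Sum.inr 1 then L else x :: L

theorem rcons_ll (a a1 : G) (t : List (G ⊕ H)) :
    rcons (Sum.inl a) (Sum.inl a1 :: t) = if a * a1 = 1 then t else Sum.inl (a * a1) :: t := rfl

theorem rcons_rr (b b1 : H) (t : List (G ⊕ H)) :
    rcons (Sum.inr b) (Sum.inr b1 :: t) = if b * b1 = 1 then t else Sum.inr (b * b1) :: t := rfl

theorem rcons_other (x : G ⊕ H) {L : List (G ⊕ H)}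
    (h : ∀ y t, L = y :: t → y.isLeft ≠ x.isLeft) :
    rcons x L = if x = Sum.inl 1 ∨ x = Sum.inr 1 then L else x :: L := by
  rcases x with a | b <;> rcases L with _ | ⟨c | c, t⟩ <;>
    first
      | rfl
      | (exact absurd (h _ _ rfl) (by simp))

theorem Red.rcons {L : List (G ⊕ H)} (h : Red L) (x : G ⊕ H) : Red (rcons x L) := by
  obtain ⟨halt, hnt⟩ := h
  rcases x with a | b <;> rcases L with _ | ⟨c | c, t⟩
  · rw [rcons_other _ (by simp)]
    split
    · exact ⟨halt, hnt⟩
    · rename_i hc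
      push_neg at hc
      exact ⟨List.isChain_singleton _, by simpa [Nt, Sum.inl.injEq] using fun h1 => (hc.1 (by rw [h1]))⟩
  · rw [rcons_ll]
    split
    · exact red_tail ⟨halt, hnt⟩
    · rename_i hc
      constructor
      · rcases t with _ | ⟨z, t'⟩
        · exact List.isChain_singleton _
        · exact List.isChain_cons_cons.2 ⟨(List.isChain_cons_cons.1 halt).1, (List.isChain_cons_cons.1 halt).2⟩
      · intro y hy
        rcases mem_cons.1 hy with rfl | hy
        · exact ⟨by simpa using hc, by simp⟩
        · exact hnt y (mem_cons_of_mem _ hy)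
  · rw [rcons_other _ (by simp)]
    split
    · exact ⟨halt, hnt⟩
    · rename_i hc
      push_neg at hc
      refine ⟨List.isChain_cons_cons.2 ⟨by simp, halt⟩, ?_⟩
      intro y hy
      rcases mem_cons.1 hy with rfl | hy
      · exact ⟨fun h1 => hc.1 (by rw [h1]), by simp⟩
      · exact hnt y hy
  · rw [rcons_other _ (by simp)]
    split
    · exact ⟨halt, hnt⟩
    · rename_i hc
      push_neg at hc
      exact ⟨List.isChain_singleton _, by simpa [Nt] using fun h1 => (hc.2 (by rw [h1]))⟩
  · rw [rcons_other _ (by simp)]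
    split
    · exact ⟨halt, hnt⟩
    · rename_i hc
      push_neg at hc
      refine ⟨List.isChain_cons_cons.2 ⟨by simp, halt⟩, ?_⟩
      intro y hy
      rcases mem_cons.1 hy with rfl | hy
      · exact ⟨by simp, fun h1 => hc.2 (by rw [h1])⟩
      · exact hnt y hy
  · rw [rcons_rr]
    split
    · exact red_tail ⟨halt, hnt⟩
    · rename_i hc
      constructor
      · rcases t with _ | ⟨z, t'⟩
        · exact List.isChain_singleton _
        · exact List.isChain_cons_cons.2 ⟨(List.isChain_cons_cons.1 halt).1, (List.isChain_cons_cons.1 halt).2⟩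
      · intro y hy
        rcases mem_cons.1 hy with rfl | hy
        · exact ⟨by simp, by simpa using hc⟩
        · exact hnt y (mem_cons_of_mem _ hy)

theorem toCop_inl (a : G) : toCop (Sum.inl a) = (inl a : Coprod G H) := rfl
theorem toCop_inr (b : H) : toCop (Sum.inr b) = (inr b : Coprod G H) := rfl

theorem prodL_rcons (x : G ⊕ H) (L : List (G ⊕ H)) :
    prodL (rcons x L) = toCop x * prodL L := by
  have triv : ∀ (y : G ⊕ H), y = Sum.inl 1 ∨ y = Sum.inr 1 → toCop y = 1 := by
    rintro y (rfl | rfl) <;> simp [toCop]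
  rcases x with a | b <;> rcases L with _ | ⟨c | c, t⟩
  · rw [rcons_other _ (by simp)]
    split
    · rename_i hc; rw [triv _ hc, one_mul]
    · rw [prodL_cons]
  · rw [rcons_ll]
    split
    · rename_i hc
      rw [prodL_cons, ← mul_assoc, toCop_inl, toCop_inl, ← map_mul, hc, map_one, one_mul]
    · rw [prodL_cons, prodL_cons, toCop_inl, toCop_inl, toCop_inl, ← mul_assoc, ← map_mul]
  · rw [rcons_other _ (by simp)]
    split
    · rename_i hc; rw [triv _ hc, one_mul]
    · rw [prodL_cons]
  · rw [rcons_other _ (by simp)]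
    split
    · rename_i hc; rw [triv _ hc, one_mul]
    · rw [prodL_cons]
  · rw [rcons_other _ (by simp)]
    split
    · rename_i hc; rw [triv _ hc, one_mul]
    · rw [prodL_cons]
  · rw [rcons_rr]
    split
    · rename_i hc
      rw [prodL_cons, ← mul_assoc, toCop_inr, toCop_inr, ← map_mul, hc, map_one, one_mul]
    · rw [prodL_cons, prodL_cons, toCop_inr, toCop_inr, toCop_inr, ← mul_assoc, ← map_mul]

noncomputable def reduceL (L : List (G ⊕ H)) : List (G ⊕ H) := L.foldr rcons []

theorem red_reduceL (L : List (G ⊕ H)) : Red (reduceL L) := by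
  induction L with
  | nil => exact ⟨List.isChain_nil, by simp [reduceL]⟩
  | cons x t ih => exact ih.rcons x

theorem prodL_reduceL (L : List (G ⊕ H)) : prodL (reduceL L) = prodL L := by
  induction L with
  | nil => rfl
  | cons x t ih =>
    show prodL (rcons x (reduceL t)) = _
    rw [prodL_rcons, ih, prodL_cons]

theorem exists_red (w : Coprod G H) : ∃ L : List (G ⊕ H), Red L ∧ prodL L = w := by
  obtain ⟨L, hL⟩ := exists_prodL w
  exact ⟨reduceL L, red_reduceL L, by rw [prodL_reduceL, hL]⟩

end Words2

section Key
variable {G H A B : Type} [Group G] [Group H] [Group A] [Group B]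

theorem ok_map (f : G →* A) (g : H →* B) {n : ℕ} {L : List (G ⊕ H)} (halt : Alt L)
    (hσ : ∀ x ∈ L, Nt (Sum.map f g x)) (hlen : L.length ≤ n) :
    Ok n (L.map (Sum.map f g)) := by
  refine ⟨by simpa using hlen, ?_, ?_⟩
  · rw [Alt, List.Chain', List.isChain_map]
    refine halt.imp ?_
    intro x y h
    simpa using h
  · intro y hy
    obtain ⟨x, hx, rfl⟩ := List.mem_map.1 hy
    exact hσ x hx

theorem key_comp (f : G →* A) (g : H →* B) (n : ℕ) :
    ∀ L : List (G ⊕ H), ∀ (halt : Alt L) (hσ : ∀ x ∈ L, Nt (Sum.map f g x))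
      (hlen : L.length ≤ n),
    (Coprod.lift ((homA n).comp f) ((homB n).comp g)) (prodL L) ⟨[], ok_nil⟩ =
      ⟨L.map (Sum.map f g), ok_map f g halt hσ hlen⟩ := by
  intro L
  induction L with
  | nil =>
    intro _ _ _
    rw [prodL_nil, map_one]
    rfl
  | cons x t ih =>
    intro halt hσ hlen
    have ih' := ih halt.tail (fun y hy => hσ y (mem_cons_of_mem _ hy))
      (le_trans (by simp) hlen)
    rw [prodL_cons, map_mul, Equiv.Perm.mul_apply, ih']
    have hhead : ∀ (z : A ⊕ B), z ∈ List.map (Sum.map ⇑f ⇑g) t →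
        ∀ y ∈ t, True := fun _ _ _ _ => trivial
    rcases x with a | b
    · rw [toCop_inl, Coprod.lift_apply_inl, MonoidHom.comp_apply]
      apply Subtype.ext
      show preA n (f a) (t.map (Sum.map f g)) = (Sum.inl a :: t).map (Sum.map f g)
      have hnohead : ∀ (c : A) (z : List (A ⊕ B)),
          t.map (Sum.map f g) ≠ Sum.inl c :: z := by
        rcases t with _ | ⟨y, t'⟩
        · simp
        · rcases y with c' | c'
          · have := (List.isChain_cons_cons.1 halt).1
            simp at this
          · simp
      rw [preA_other _ hnohead, if_neg]
      · simp
      · push_neg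
        constructor
        · intro hfa
          exact (hσ (Sum.inl a) (mem_cons_self ..)).1 (by simp [hfa])
        · have : t.length + 1 ≤ n := by simpa using hlen
          simpa using by omega
    · rw [toCop_inr, Coprod.lift_apply_inr, MonoidHom.comp_apply]
      apply Subtype.ext
      show preB n (g b) (t.map (Sum.map f g)) = (Sum.inr b :: t).map (Sum.map f g)
      have hnohead : ∀ (c : B) (z : List (A ⊕ B)),
          t.map (Sum.map f g) ≠ Sum.inr c :: z := by
        rcases t with _ | ⟨y, t'⟩
        · simp
        · rcases y with c' | c'
          · simp
          · have := (List.isChain_cons_cons.1 halt).1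
            simp at this
      rw [preB_other _ hnohead, if_neg]
      · simp
      · push_neg
        constructor
        · intro hgb
          exact (hσ (Sum.inr b) (mem_cons_self ..)).2 (by simp [hgb])
        · have : t.length + 1 ≤ n := by simpa using hlen
          simpa using by omega

end Key

theorem coprod_rfin {G H : Type} [Group G] [Group H] (hG : RFin G) (hH : RFin H) :
    RFin (Coprod G H) := by
  intro w hw
  obtain ⟨L, hred, hLw⟩ := exists_red w
  have hLne : L ≠ [] := by
    rintro rfl
    exact hw (by rw [← hLw, prodL_nil])
  obtain ⟨A, _, _, f, hf⟩ := hG.exists_hom_list (L.filterMap fun x => x.getLeft?) (by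
    intro x hx
    obtain ⟨y, hy, hxy⟩ := List.mem_filterMap.1 hx
    rcases y with a | b
    · simp at hxy
      subst hxy
      exact fun hc => (hred.2 _ hy).1 (by rw [hc])
    · simp at hxy)
  obtain ⟨B, _, _, g, hg⟩ := hH.exists_hom_list (L.filterMap fun x => x.getRight?) (by
    intro x hx
    obtain ⟨y, hy, hxy⟩ := List.mem_filterMap.1 hx
    rcases y with a | b
    · simp at hxy
    · simp at hxy
      subst hxy
      exact fun hc => (hred.2 _ hy).2 (by rw [hc]))
  set n := L.length with hn
  have hσ : ∀ x ∈ L, Nt (Sum.map f g x) := by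
    intro x hx
    rcases x with a | b
    · refine ⟨?_, by simp⟩
      have : f a ≠ 1 := hf a (List.mem_filterMap.2 ⟨Sum.inl a, hx, rfl⟩)
      simpa using this
    · refine ⟨by simp, ?_⟩
      have : g b ≠ 1 := hg b (List.mem_filterMap.2 ⟨Sum.inr b, hx, rfl⟩)
      simpa using this
  refine ⟨Equiv.Perm (XW A B n), inferInstance, inferInstance,
    Coprod.lift ((homA n).comp f) ((homB n).comp g), ?_⟩
  intro hc
  have hkey := key_comp f g n L hred.1 hσ le_rfl
  rw [hLw, hc] at hkey
  have : ([] : List (A ⊕ B)) = L.map (Sum.map f g) := congrArg Subtype.val hkey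
  exact hLne (by simpa using this.symm)

section FG

/-- Free group on a sum is the coproduct of free groups. -/
noncomputable def fgSum (α β : Type) :
    FreeGroup (α ⊕ β) ≃* Coprod (FreeGroup α) (FreeGroup β) :=
  MonoidHom.toMulEquiv
    (FreeGroup.lift (Sum.elim (fun a => (inl (FreeGroup.of a) : Coprod _ _))
      fun b => inr (FreeGroup.of b)))
    (Coprod.lift (FreeGroup.lift fun a => FreeGroup.of (Sum.inl a))
      (FreeGroup.lift fun b => FreeGroup.of (Sum.inr b)))
    (by
      apply FreeGroup.ext_hom
      rintro (a | b) <;> simp)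
    (by
      apply Coprod.hom_ext <;> apply FreeGroup.ext_hom <;> intro a <;> simp)

theorem rfin_freeGroup_punit : RFin (FreeGroup PUnit) := by
  intro w hw
  have hmem : w ∈ Subgroup.zpowers (FreeGroup.of PUnit.unit) := by
    have h1 : (Subgroup.closure (Set.range (FreeGroup.of : PUnit → FreeGroup PUnit))) = ⊤ :=
      FreeGroup.closure_range_of _
    have h2 : Set.range (FreeGroup.of : PUnit → FreeGroup PUnit) = {FreeGroup.of PUnit.unit} :=
      Set.range_unique
    rw [h2] at h1
    rw [← Subgroup.zpowers_eq_closure] at h1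
    rw [h1]
    trivial
  obtain ⟨m, hm⟩ := Subgroup.mem_zpowers_iff.1 hmem
  have hm0 : m ≠ 0 := by
    rintro rfl
    exact hw (by rw [← hm, zpow_zero])
  set M : ℕ := m.natAbs + 1 with hM
  have hMdvd : ¬ ((M : ℤ) ∣ m) := by
    intro hdvd
    have h1 : M ∣ m.natAbs := Int.natCast_dvd_natCast.mp (Int.dvd_natAbs.2 hdvd)
    have h2 := Nat.le_of_dvd (Int.natAbs_pos.2 hm0) h1
    omega
  haveI : NeZero M := ⟨by omega⟩
  refine ⟨Multiplicative (ZMod M), inferInstance, inferInstance,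
    ((Int.castAddHom (ZMod M)).toMultiplicative).comp
      (FreeGroup.lift fun _ => Multiplicative.ofAdd (1 : ℤ)), ?_⟩
  rw [MonoidHom.comp_apply, ← hm, map_zpow, map_zpow]
  intro hc
  apply hMdvd
  have h1 : (FreeGroup.lift fun _ : PUnit => Multiplicative.ofAdd (1 : ℤ))
      (FreeGroup.of PUnit.unit) = Multiplicative.ofAdd (1 : ℤ) := FreeGroup.lift_apply_of
  rw [h1] at hc
  have h2 : (Int.castAddHom (ZMod M)).toMultiplicative (Multiplicative.ofAdd (1 : ℤ)) =
      Multiplicative.ofAdd ((1 : ℤ) : ZMod M) := rfl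
  rw [h2] at hc
  have h3 : Multiplicative.ofAdd ((m : ℤ) : ZMod M) = 1 := by
    rw [← hc, ← ofAdd_zsmul]
    norm_num
  have h4 : ((m : ℤ) : ZMod M) = 0 := by
    simpa using h3
  exact (ZMod.intCast_zmod_eq_zero_iff_dvd m M).1 h4

theorem rfin_freeGroup_fin : ∀ k : ℕ, RFin (FreeGroup (Fin k)) := by
  intro k
  induction k with
  | zero =>
    have hall : ∀ w : FreeGroup (Fin 0), w = 1 := by
      intro w
      induction w using FreeGroup.induction_on with
      | C1 => rfl
      | of x => exact x.elim0
      | inv_of x ih => rw [ih]; simp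
      | mul x y ihx ihy => rw [ihx, ihy, one_mul]
    intro w hw
    exact absurd (hall w) hw
  | succ k ih =>
    have e : Fin (k + 1) ≃ (Fin k ⊕ PUnit) :=
      (finSuccEquiv k).trans (Equiv.optionEquivSumPUnit (Fin k))
    have h1 : RFin (Coprod (FreeGroup (Fin k)) (FreeGroup PUnit)) :=
      coprod_rfin ih rfin_freeGroup_punit
    have h2 : RFin (FreeGroup (Fin k ⊕ PUnit)) :=
      RFin.of_injective (fgSum _ _).toMonoidHom (fgSum _ _).injective h1
    exact RFin.of_injective (FreeGroup.freeGroupCongr e).toMonoidHom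
      (FreeGroup.freeGroupCongr e).injective h2

theorem exists_finset {ι : Type} (w : FreeGroup ι) :
    ∃ (s : Finset ι) (u : FreeGroup {i // i ∈ s}),
      (FreeGroup.lift fun p : {i // i ∈ s} => FreeGroup.of p.1) u = w := by
  induction w using FreeGroup.induction_on with
  | C1 => exact ⟨∅, 1, by simp⟩
  | of x => exact ⟨{x}, FreeGroup.of ⟨x, by simp⟩, by simp⟩
  | inv_of x ih => exact ⟨{x}, (FreeGroup.of ⟨x, by simp⟩)⁻¹, by simp⟩
  | mul x y ihx ihy =>
    obtain ⟨s1, u1, h1⟩ := ihx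
    obtain ⟨s2, u2, h2⟩ := ihy
    refine ⟨s1 ∪ s2,
      (FreeGroup.lift fun p : {i // i ∈ s1} =>
        FreeGroup.of (⟨p.1, Finset.mem_union_left _ p.2⟩ : {i // i ∈ s1 ∪ s2})) u1 *
      (FreeGroup.lift fun p : {i // i ∈ s2} =>
        FreeGroup.of (⟨p.1, Finset.mem_union_right _ p.2⟩ : {i // i ∈ s1 ∪ s2})) u2, ?_⟩
    rw [map_mul]
    have e1 : ∀ (s1' : Finset ι) (hsub : ∀ i ∈ s1', i ∈ s1 ∪ s2) (u : FreeGroup {i // i ∈ s1'}),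
        (FreeGroup.lift fun p : {i // i ∈ s1 ∪ s2} => FreeGroup.of p.1)
          ((FreeGroup.lift fun p : {i // i ∈ s1'} =>
            FreeGroup.of (⟨p.1, hsub p.1 p.2⟩ : {i // i ∈ s1 ∪ s2})) u) =
        (FreeGroup.lift fun p : {i // i ∈ s1'} => FreeGroup.of p.1) u := by
      intro s1' hsub u
      have := FreeGroup.ext_hom
        ((FreeGroup.lift fun p : {i // i ∈ s1 ∪ s2} => FreeGroup.of p.1).comp
          (FreeGroup.lift fun p : {i // i ∈ s1'} =>
            FreeGroup.of (⟨p.1, hsub p.1 p.2⟩ : {i // i ∈ s1 ∪ s2})))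
        (FreeGroup.lift fun p : {i // i ∈ s1'} => FreeGroup.of p.1)
        (by intro a; simp)
      exact DFunLike.congr_fun this u
    rw [e1 s1 (fun i hi => Finset.mem_union_left _ hi) u1,
      e1 s2 (fun i hi => Finset.mem_union_right _ hi) u2, h1, h2]

theorem rfin_freeGroup (ι : Type) : RFin (FreeGroup ι) := by
  intro w hw
  obtain ⟨s, u, hu⟩ := exists_finset w
  have hu1 : u ≠ 1 := by
    rintro rfl
    exact hw (by rw [← hu, map_one])
  have hs : RFin (FreeGroup {i // i ∈ s}) := by
    have e : {i // i ∈ s} ≃ Fin (Fintype.card {i // i ∈ s}) := Fintype.equivFin _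
    exact RFin.of_injective (FreeGroup.freeGroupCongr e).toMonoidHom
      (FreeGroup.freeGroupCongr e).injective (rfin_freeGroup_fin _)
  obtain ⟨K, _, _, q, hq⟩ := hs u hu1
  let π : FreeGroup ι →* FreeGroup {i // i ∈ s} :=
    FreeGroup.lift fun i => if h : i ∈ s then FreeGroup.of (⟨i, h⟩ : {i // i ∈ s}) else 1
  have hπ : π w = u := by
    rw [← hu]
    have : π.comp (FreeGroup.lift fun p : {i // i ∈ s} => FreeGroup.of p.1) =
        MonoidHom.id _ := by
      apply FreeGroup.ext_hom
      rintro ⟨i, hi⟩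
      simp [π, hi]
    exact DFunLike.congr_fun this u
  refine ⟨K, inferInstance, inferInstance, q.comp π, ?_⟩
  rw [MonoidHom.comp_apply, hπ]
  exact hq

end FG

theorem freeProduct_residuallyFinite :
    (∀ (G H : Type) (_ : Group G) (_ : Group H),
      IsResiduallyFinite G → IsResiduallyFinite H →
        IsResiduallyFinite (Monoid.Coprod G H)) ∧
    (∀ (Γ : Type) (_ : Group Γ) (ι : Type), IsResiduallyFinite Γ →
        IsResiduallyFinite (Monoid.Coprod Γ (FreeGroup ι))) := by
  constructor
  · intro G H _ _ hG hH
    exact (coprod_rfin hG.rfin hH.rfin).isResiduallyFinite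
  · intro Γ _ ι hΓ
    exact (coprod_rfin hΓ.rfin (rfin_freeGroup ι)).isResiduallyFinite
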